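/- arXiv:2308.11067 — 7 statements merged into one kernel-verified Lean document; each statement's English description precedes it below -/
import Mathlib

section
/- Let G be a group and a, b ∈ G satisfy ab² = b³a² and ba² = a³b². Then ba = 1 (equivalently, a = b⁻¹). -/
theorem stmt_0 {G : Type*} [Group G] (a b : G)
    (h1 : a * b ^ 2 = b ^ 3 * a ^ 2) (h2 : b * a ^ 2 = a ^ 3 * b ^ 2) :
    b * a = 1 := by
  have hx : b * a ^ 2 = a ^ 2 * b ^ 3 * a ^ 2 := by
    calc b * a ^ 2 = a ^ 3 * b ^ 2 := h2
      _ = a ^ 2 * (a * b ^ 2) := by group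
      _ = a ^ 2 * (b ^ 3 * a ^ 2) := by rw [h1]
      _ = a ^ 2 * b ^ 3 * a ^ 2 := by group
  have h5 : b = a ^ 2 * b ^ 3 := mul_right_cancel hx
  have ha2 : a ^ 2 = b⁻¹ ^ 2 := by
    calc a ^ 2 = a ^ 2 * b ^ 3 * b⁻¹ ^ 3 := by group
      _ = b * b⁻¹ ^ 3 := by rw [← h5]
      _ = b⁻¹ ^ 2 := by group
  have hfin : a * b ^ 2 = b := by
    calc a * b ^ 2 = b ^ 3 * a ^ 2 := h1
      _ = b ^ 3 * b⁻¹ ^ 2 := by rw [ha2]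
      _ = b := by group
  have hab : a = b⁻¹ := by
    calc a = a * b ^ 2 * b⁻¹ ^ 2 := by group
      _ = b * b⁻¹ ^ 2 := by rw [hfin]
      _ = b⁻¹ := by group
  rw [hab]; group
end

section
/- The element y⁻¹xyx of the free group on x, y lies in the normal closure of the set {y⁻²xy²x⁻¹, x⁻³(y⁻¹xy)x²(y⁻¹x⁻²y)}. -/
theorem stmt_6 :
    let x : FreeGroup (Fin 2) := FreeGroup.of 0
    let y : FreeGroup (Fin 2) := FreeGroup.of 1
    y⁻¹ * x * y * x ∈ Subgroup.normalClosure
      ({y⁻¹ ^ 2 * x * y ^ 2 * x⁻¹, x⁻¹ ^ 3 * (y⁻¹ * x * y) * x ^ 2 * (y⁻¹ * x⁻¹ ^ 2 * y)} :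
        Set (FreeGroup (Fin 2))) := by
  intro x y
  set r1 : FreeGroup (Fin 2) := y⁻¹ ^ 2 * x * y ^ 2 * x⁻¹ with hr1
  set r2 : FreeGroup (Fin 2) := x⁻¹ ^ 3 * (y⁻¹ * x * y) * x ^ 2 * (y⁻¹ * x⁻¹ ^ 2 * y) with hr2
  have hN : (Subgroup.normalClosure ({r1, r2} : Set (FreeGroup (Fin 2)))).Normal :=
    Subgroup.normalClosure_normal
  have h1 : r1 ∈ Subgroup.normalClosure ({r1, r2} : Set (FreeGroup (Fin 2))) :=
    Subgroup.subset_normalClosure (Set.mem_insert _ _)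
  have h2 : r2 ∈ Subgroup.normalClosure ({r1, r2} : Set (FreeGroup (Fin 2))) :=
    Subgroup.subset_normalClosure (Set.mem_insert_of_mem _ rfl)
  have key : y⁻¹ * x * y * x = ((x * x * y) * r1⁻¹ * (x * x * y)⁻¹) * ((x * x * y⁻¹ * x * y * y) * r1⁻¹ * (x * x * y⁻¹ * x * y * y)⁻¹) * ((x * x) * r2⁻¹ * (x * x)⁻¹) * ((x⁻¹ * y⁻¹ * x * y * y) * r2⁻¹ * (x⁻¹ * y⁻¹ * x * y * y)⁻¹) * ((x⁻¹ * y) * r1 * (x⁻¹ * y)⁻¹) * ((x⁻¹ * y * x⁻¹ * x⁻¹) * r1 * (x⁻¹ * y * x⁻¹ * x⁻¹)⁻¹) * ((x⁻¹ * y * x⁻¹) * r1 * (x⁻¹ * y * x⁻¹)⁻¹) * ((x⁻¹ * y⁻¹ * x⁻¹ * x⁻¹ * y * x⁻¹) * r1 * (x⁻¹ * y⁻¹ * x⁻¹ * x⁻¹ * y * x⁻¹)⁻¹) * ((x⁻¹) * r1 * (x⁻¹)⁻¹) * ((y⁻¹ * y⁻¹ * x⁻¹ * x⁻¹ * x⁻¹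 * y) * r2⁻¹ * (y⁻¹ * y⁻¹ * x⁻¹ * x⁻¹ * x⁻¹ * y)⁻¹) * ((y⁻¹ * y⁻¹ * x⁻¹ * x⁻¹ * x⁻¹ * y) * r1⁻¹ * (y⁻¹ * y⁻¹ * x⁻¹ * x⁻¹ * x⁻¹ * y)⁻¹) * ((y⁻¹ * y⁻¹) * r2 * (y⁻¹ * y⁻¹)⁻¹) * ((y⁻¹) * r1 * (y⁻¹)⁻¹) * ((y⁻¹ * x) * r1 * (y⁻¹ * x)⁻¹) * ((y) * r1 * (y)⁻¹) * ((y * x) * r1 * (y * x)⁻¹) * ((y * x * x * y⁻¹ * x⁻¹) * r1⁻¹ * (y * x * x * y⁻¹ * x⁻¹)⁻¹) * ((y * x * x * y⁻¹ * x⁻¹ * x⁻¹) * r1⁻¹ * (y * x * x * y⁻¹ * x⁻¹ * x⁻¹)⁻¹) * ((x⁻¹ * y * x * x * x) * r2 * (x⁻¹ * y * x * x * x)⁻¹) * ((x⁻¹ * y * x * x) * r1⁻¹ * (x⁻¹ * y * x * x)⁻¹) * ((x⁻¹ * y * x) * r1⁻¹ * (x⁻¹ * y * x)⁻¹) * ((x⁻¹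 * y) * r1⁻¹ * (x⁻¹ * y)⁻¹) := by
    rw [hr1, hr2]; group
  rw [key]
  exact (mul_mem (mul_mem (mul_mem (mul_mem (mul_mem (mul_mem (mul_mem (mul_mem (mul_mem (mul_mem (mul_mem (mul_mem (mul_mem (mul_mem (mul_mem (mul_mem (mul_mem (mul_mem (mul_mem (mul_mem (mul_mem (hN.conj_mem _ (inv_mem h1) (x * x * y)) (hN.conj_mem _ (inv_mem h1) (x * x * y⁻¹ * x * y * y))) (hN.conj_mem _ (inv_mem h2) (x * x))) (hN.conj_mem _ (inv_mem h2) (x⁻¹ * y⁻¹ * x * y * y))) (hN.conj_mem _ h1 (x⁻¹ * y))) (hN.conj_mem _ h1 (x⁻¹ * y * x⁻¹ * x⁻¹))) (hN.conj_mem _ h1 (x⁻¹ * y * x⁻¹))) (hN.conj_mem _ h1 (x⁻¹ * y⁻¹ * x⁻¹ * x⁻¹ * y * x⁻¹))) (hN.conj_mem _ h1 (x⁻¹))) (hN.conj_mem _ (inv_mem h2) (y⁻¹ * y⁻¹ * x⁻¹ * x⁻¹ * x⁻¹ * y))) (hN.conj_mem _ (inv_mem h1) (y⁻¹ * y⁻¹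 * x⁻¹ * x⁻¹ * x⁻¹ * y))) (hN.conj_mem _ h2 (y⁻¹ * y⁻¹))) (hN.conj_mem _ h1 (y⁻¹))) (hN.conj_mem _ h1 (y⁻¹ * x))) (hN.conj_mem _ h1 (y))) (hN.conj_mem _ h1 (y * x))) (hN.conj_mem _ (inv_mem h1) (y * x * x * y⁻¹ * x⁻¹))) (hN.conj_mem _ (inv_mem h1) (y * x * x * y⁻¹ * x⁻¹ * x⁻¹))) (hN.conj_mem _ h2 (x⁻¹ * y * x * x * x))) (hN.conj_mem _ (inv_mem h1) (x⁻¹ * y * x * x))) (hN.conj_mem _ (inv_mem h1) (x⁻¹ * y * x))) (hN.conj_mem _ (inv_mem h1) (x⁻¹ * y)))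
end

section
/- The presentations ⟨x, y | y⁻¹xyx⟩ and ⟨x, y | y⁻²xy²x⁻¹, x⁻³(y⁻¹xy)x²(y⁻¹x⁻²y)⟩ define isomorphic groups (both presenting the Klein bottle group), via the identity map on generators. -/
/-- The single Klein bottle relator `y⁻¹xyx`. -/
def kleinRels : Set (FreeGroup (Fin 2)) :=
  {(FreeGroup.of 1)⁻¹ * FreeGroup.of 0 * FreeGroup.of 1 * FreeGroup.of 0}

/-- The relators `y⁻²xy²x⁻¹` and `x⁻³(y⁻¹xy)x²(y⁻¹x⁻²y)`. -/
def qRels : Set (FreeGroup (Fin 2)) :=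
  { (FreeGroup.of 1)⁻¹ ^ 2 * FreeGroup.of 0 * FreeGroup.of 1 ^ 2 * (FreeGroup.of 0)⁻¹,
    (FreeGroup.of 0)⁻¹ ^ 3 * ((FreeGroup.of 1)⁻¹ * FreeGroup.of 0 * FreeGroup.of 1) *
      FreeGroup.of 0 ^ 2 * ((FreeGroup.of 1)⁻¹ * (FreeGroup.of 0)⁻¹ ^ 2 * FreeGroup.of 1) }

/-- In any group, the two q-relations imply the Klein relation. -/
lemma key_q_to_klein {G : Type*} [Group G] (X Y : G)
    (h1 : Y⁻¹ ^ 2 * X * Y ^ 2 * X⁻¹ = 1)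
    (h2 : X⁻¹ ^ 3 * (Y⁻¹ * X * Y) * X ^ 2 * (Y⁻¹ * X⁻¹ ^ 2 * Y) = 1) :
    Y⁻¹ * X * Y * X = 1 := by
  simp only [pow_succ, pow_zero, one_mul] at h1 h2
  have h1' : Y⁻¹ * (Y⁻¹ * X * Y) * Y * X⁻¹ = 1 := by rw [← h1]; group
  have h2' : X⁻¹ * X⁻¹ * X⁻¹ * (Y⁻¹ * X * Y) * (X * X) * (Y⁻¹ * X⁻¹ * X⁻¹ * Y) = 1 := by
    rw [← h2]; group
  set a := Y⁻¹ * X * Y with ha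
  have F1 : Y⁻¹ * a * Y = X := by rw [← mul_inv_eq_one]; exact h1'
  have F2 : a * (X * X) = X * X * X * (a * a) := by
    rw [← mul_inv_eq_one]
    calc a * (X * X) * (X * X * X * (a * a))⁻¹
        = (X * X * X) * (X⁻¹ * X⁻¹ * X⁻¹ * a * (X * X) * (Y⁻¹ * X⁻¹ * X⁻¹ * Y)) *
          (X⁻¹ * X⁻¹ * X⁻¹) := by rw [ha]; group
      _ = 1 := by rw [h2']; group
  have F3 : X * (a * a) = a * a * a * (X * X) := by
    calc X * (a * a) = (Y⁻¹ * a * Y) * (a * a) := by rw [F1]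
      _ = Y⁻¹ * (a * (Y * a * Y⁻¹) * (Y * a * Y⁻¹)) * Y := by group
      _ = Y⁻¹ * (a * X * X) * Y := by rw [ha]; group
      _ = Y⁻¹ * (a * (X * X)) * Y := by group
      _ = Y⁻¹ * (X * X * X * (a * a)) * Y := by rw [F2]
      _ = (Y⁻¹ * X * Y) * (Y⁻¹ * X * Y) * (Y⁻¹ * X * Y) *
          ((Y⁻¹ * a * Y) * (Y⁻¹ * a * Y)) := by group
      _ = a * a * a * ((Y⁻¹ * a * Y) * (Y⁻¹ * a * Y)) := by rw [← ha]
      _ = a * a * a * (X * X) := by rw [F1]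
  have F4 : a = X * X * (a * a * a) := by
    calc a = a * (X * X) * (X⁻¹ * X⁻¹) := by group
      _ = X * X * X * (a * a) * (X⁻¹ * X⁻¹) := by rw [F2]
      _ = X * X * (X * (a * a)) * (X⁻¹ * X⁻¹) := by group
      _ = X * X * (a * a * a * (X * X)) * (X⁻¹ * X⁻¹) := by rw [F3]
      _ = X * X * (a * a * a) := by group
  have F5 : X * X = a⁻¹ * a⁻¹ := by
    calc X * X = X * X * (a * a * a) * (a⁻¹ * a⁻¹ * a⁻¹) := by group
      _ = a * (a⁻¹ * a⁻¹ * a⁻¹) := by rw [← F4]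
      _ = a⁻¹ * a⁻¹ := by group
  have F5' : a * a = X⁻¹ * X⁻¹ := by
    calc a * a = (a⁻¹ * a⁻¹)⁻¹ := by simp only [mul_inv_rev, inv_inv]
      _ = (X * X)⁻¹ := by rw [F5]
      _ = X⁻¹ * X⁻¹ := by group
  have F6 : a = X⁻¹ := by
    calc a = a * (X * X) * (X⁻¹ * X⁻¹) := by group
      _ = X * X * X * (a * a) * (X⁻¹ * X⁻¹) := by rw [F2]
      _ = X * X * X * (X⁻¹ * X⁻¹) * (X⁻¹ * X⁻¹) := by rw [F5']
      _ = X⁻¹ := by group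
  show a * X = 1
  rw [F6]; group

/-- In any group, the Klein relation implies the two q-relations. -/
lemma key_klein_to_q {G : Type*} [Group G] (X Y : G)
    (hk : Y⁻¹ * X * Y * X = 1) :
    Y⁻¹ ^ 2 * X * Y ^ 2 * X⁻¹ = 1 ∧
    X⁻¹ ^ 3 * (Y⁻¹ * X * Y) * X ^ 2 * (Y⁻¹ * X⁻¹ ^ 2 * Y) = 1 := by
  have hx : Y⁻¹ * X * Y = X⁻¹ := by
    rw [← mul_inv_eq_one]
    calc Y⁻¹ * X * Y * (X⁻¹)⁻¹ = Y⁻¹ * X * Y * X := by group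
      _ = 1 := hk
  have hx' : Y⁻¹ * X⁻¹ * Y = X := by
    calc Y⁻¹ * X⁻¹ * Y = (Y⁻¹ * X * Y)⁻¹ := by group
      _ = (X⁻¹)⁻¹ := by rw [hx]
      _ = X := by group
  have p1 : Y⁻¹ * Y⁻¹ * X * (Y * Y) * X⁻¹ = 1 := by
    calc Y⁻¹ * Y⁻¹ * X * (Y * Y) * X⁻¹
        = Y⁻¹ * (Y⁻¹ * X * Y) * Y * X⁻¹ := by group
      _ = Y⁻¹ * X⁻¹ * Y * X⁻¹ := by rw [hx]
      _ = X * X⁻¹ := by rw [hx']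
      _ = 1 := by group
  have p2 : X⁻¹ * X⁻¹ * X⁻¹ * (Y⁻¹ * X * Y) * (X * X) * (Y⁻¹ * X⁻¹ * X⁻¹ * Y) = 1 := by
    calc X⁻¹ * X⁻¹ * X⁻¹ * (Y⁻¹ * X * Y) * (X * X) * (Y⁻¹ * X⁻¹ * X⁻¹ * Y)
        = X⁻¹ * X⁻¹ * X⁻¹ * (Y⁻¹ * X * Y) * (X * X) *
          ((Y⁻¹ * X⁻¹ * Y) * (Y⁻¹ * X⁻¹ * Y)) := by group
      _ = X⁻¹ * X⁻¹ * X⁻¹ * X⁻¹ * (X * X) * (X * X) := by rw [hx, hx']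
      _ = 1 := by group
  constructor
  · simp only [pow_succ, pow_zero, one_mul]
    rw [← p1]
  · simp only [pow_succ, pow_zero, one_mul]
    rw [← p2]; group

lemma closure_eq : Subgroup.normalClosure kleinRels = Subgroup.normalClosure qRels := by
  apply le_antisymm
  · apply Subgroup.normalClosure_le_normal
    intro w hw
    rw [kleinRels, Set.mem_singleton_iff] at hw
    subst hw
    rw [SetLike.mem_coe, ← QuotientGroup.eq_one_iff]
    set N := Subgroup.normalClosure qRels
    have h1 : (((FreeGroup.of 1 : FreeGroup (Fin 2))⁻¹ ^ 2 * FreeGroup.of 0 * FreeGroup.of 1 ^ 2 *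
        (FreeGroup.of 0)⁻¹ : FreeGroup (Fin 2)) : FreeGroup (Fin 2) ⧸ N) = 1 := by
      rw [QuotientGroup.eq_one_iff]
      exact Subgroup.subset_normalClosure (Set.mem_insert _ _)
    have h2 : (((FreeGroup.of 0 : FreeGroup (Fin 2))⁻¹ ^ 3 *
        ((FreeGroup.of 1)⁻¹ * FreeGroup.of 0 * FreeGroup.of 1) * FreeGroup.of 0 ^ 2 *
        ((FreeGroup.of 1)⁻¹ * (FreeGroup.of 0)⁻¹ ^ 2 * FreeGroup.of 1) : FreeGroup (Fin 2)) :
        FreeGroup (Fin 2) ⧸ N) = 1 := by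
      rw [QuotientGroup.eq_one_iff]
      exact Subgroup.subset_normalClosure (Set.mem_insert_iff.mpr (Or.inr rfl))
    simp only [QuotientGroup.mk_mul, QuotientGroup.mk_inv, QuotientGroup.mk_pow] at h1 h2 ⊢
    exact key_q_to_klein _ _ h1 h2
  · apply Subgroup.normalClosure_le_normal
    intro w hw
    rw [SetLike.mem_coe, ← QuotientGroup.eq_one_iff]
    set N := Subgroup.normalClosure kleinRels
    have hk : (((FreeGroup.of 1 : FreeGroup (Fin 2))⁻¹ * FreeGroup.of 0 * FreeGroup.of 1 *
        FreeGroup.of 0 : FreeGroup (Fin 2)) : FreeGroup (Fin 2) ⧸ N) = 1 := by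
      rw [QuotientGroup.eq_one_iff]
      exact Subgroup.subset_normalClosure rfl
    simp only [QuotientGroup.mk_mul, QuotientGroup.mk_inv, QuotientGroup.mk_pow] at hk
    obtain ⟨e1, e2⟩ := key_klein_to_q _ _ hk
    rw [qRels, Set.mem_insert_iff, Set.mem_singleton_iff] at hw
    rcases hw with hw | hw <;> subst hw <;>
      simp only [QuotientGroup.mk_mul, QuotientGroup.mk_inv, QuotientGroup.mk_pow]
    · exact e1
    · exact e2

theorem stmt_7 :
    ∃ e : PresentedGroup kleinRels ≃* PresentedGroup qRels,
      e (PresentedGroup.of 0) = PresentedGroup.of 0 ∧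
      e (PresentedGroup.of 1) = PresentedGroup.of 1 := by
  exact ⟨QuotientGroup.quotientMulEquivOfEq closure_eq,
    QuotientGroup.quotientMulEquivOfEq_mk closure_eq _,
    QuotientGroup.quotientMulEquivOfEq_mk closure_eq _⟩
end

section
/- In the group ring S = ℤ[K] of the Klein bottle group K = ⟨x, y | y⁻¹xyx⟩, the identity (x³ − x − 1)(x⁻³ − x⁻⁴ − y⁻¹) − (y − x⁻¹)(x⁴ − x² − x)y⁻¹ = 1 holds. -/
/-- The Klein bottle group `⟨x, y | y⁻¹xyx⟩`. -/
abbrev KleinGroup := PresentedGroup kleinRels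

/-- The integral group ring `ℤ[K]` of the Klein bottle group. -/
abbrev S := MonoidAlgebra ℤ KleinGroup

/-- The generators `x`, `y` and their inverses, viewed in the group ring. -/
noncomputable def X : S := MonoidAlgebra.of ℤ KleinGroup (PresentedGroup.of 0)
noncomputable def Y : S := MonoidAlgebra.of ℤ KleinGroup (PresentedGroup.of 1)
noncomputable def Xi : S := MonoidAlgebra.of ℤ KleinGroup (PresentedGroup.of 0)⁻¹
noncomputable def Yi : S := MonoidAlgebra.of ℤ KleinGroup (PresentedGroup.of 1)⁻¹

lemma klein_rel :
    ((PresentedGroup.of 1 : KleinGroup))⁻¹ * PresentedGroup.of 0 * PresentedGroup.of 1 *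
      PresentedGroup.of 0 = 1 := by
  have : PresentedGroup.mk kleinRels
      ((FreeGroup.of 1)⁻¹ * FreeGroup.of 0 * FreeGroup.of 1 * FreeGroup.of 0) = 1 := by
    apply (QuotientGroup.eq_one_iff _).2
    exact Subgroup.subset_normalClosure rfl
  simpa [PresentedGroup.of, map_mul, map_inv] using this

-- y * x * y⁻¹ = x⁻¹
lemma klein_conj :
    (PresentedGroup.of 1 : KleinGroup) * PresentedGroup.of 0 * (PresentedGroup.of 1)⁻¹ =
      (PresentedGroup.of 0)⁻¹ := by
  set x : KleinGroup := PresentedGroup.of 0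
  set y : KleinGroup := PresentedGroup.of 1
  have h : y⁻¹ * x * y * x = 1 := klein_rel
  have h2 : y⁻¹ * x * y = x⁻¹ := by
    have := congrArg (· * x⁻¹) h
    simpa [mul_assoc] using this
  have h3 : y⁻¹ * x⁻¹ * y = x := by
    have := congrArg (·⁻¹) h2
    simp [mul_assoc, mul_inv_rev] at this
    group at this ⊢
    simpa [mul_assoc] using this
  calc y * x * y⁻¹ = y * (y⁻¹ * x⁻¹ * y) * y⁻¹ := by rw [h3]
    _ = x⁻¹ := by group

theorem stmt_14 :
    (X ^ 3 - X - 1) * (Xi ^ 3 - Xi ^ 4 - Yi) - (Y - Xi) * (X ^ 4 - X ^ 2 - X) * Yi = 1 := by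
  set x : KleinGroup := PresentedGroup.of 0 with hxdef
  set y : KleinGroup := PresentedGroup.of 1 with hydef
  have hconj : ∀ n : ℕ, y * x ^ n * y⁻¹ = (x⁻¹) ^ n := by
    intro n
    rw [← conj_pow, klein_conj]
  simp only [X, Y, Xi, Yi, ← hxdef, ← hydef, ← map_pow, sub_mul, mul_sub, one_mul, mul_one,
    ← map_mul]
  have e1 : x ^ 3 * x⁻¹ ^ 3 = 1 := by group
  have e2 : x ^ 3 * x⁻¹ ^ 4 = x⁻¹ := by group
  have e3 : x * x⁻¹ ^ 3 = x⁻¹ ^ 2 := by group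
  have e4 : x * x⁻¹ ^ 4 = x⁻¹ ^ 3 := by group
  have f4 : y * x ^ 4 * y⁻¹ = x⁻¹ ^ 4 := hconj 4
  have f2 : y * x ^ 2 * y⁻¹ = x⁻¹ ^ 2 := hconj 2
  have f1 : y * x * y⁻¹ = x⁻¹ := klein_conj
  have g1 : x⁻¹ * x ^ 4 * y⁻¹ = x ^ 3 * y⁻¹ := by group
  have g2 : x⁻¹ * x ^ 2 * y⁻¹ = x * y⁻¹ := by group
  have g3 : x⁻¹ * x * y⁻¹ = y⁻¹ := by group
  rw [f4, f2, f1, e1, e2, e3, e4, g1, g2, g3]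
  simp only [map_one]
  abel
end

section
/- In the group ring S = ℤ[K] of the Klein bottle group, the right-module map ψ : S² → S given by ψ(u, v) = (y − x⁻¹)u + (x³ − x − 1)v is surjective. -/
lemma grel : (PresentedGroup.of 1 : KleinGroup)⁻¹ * PresentedGroup.of 0 *
    PresentedGroup.of 1 * PresentedGroup.of 0 = 1 :=
  (QuotientGroup.eq_one_iff _).mpr (Subgroup.subset_normalClosure rfl)

lemma grel' : (PresentedGroup.of 1 : KleinGroup) * PresentedGroup.of 0 =
    (PresentedGroup.of 0 : KleinGroup)⁻¹ * PresentedGroup.of 1 := by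
  have h2 := congrArg
    (fun z => (PresentedGroup.of 0 : KleinGroup)⁻¹ * (PresentedGroup.of 1 * z)) grel
  group at h2 ⊢
  exact h2

lemma hYX : Y * X = Xi * Y := by
  simp only [X, Y, Xi, ← map_mul, grel']

lemma hXXi : X * Xi = 1 := by
  simp only [X, Xi, ← map_mul, mul_inv_cancel, map_one]

lemma hXiX : Xi * X = 1 := by
  simp only [X, Xi, ← map_mul, inv_mul_cancel, map_one]

lemma l1 (c : S) : Y * (X * c) = Xi * (Y * c) := by
  rw [← mul_assoc, hYX, mul_assoc]

lemma l3 (c : S) : X * (Xi * c) = c := by rw [← mul_assoc, hXXi, one_mul]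

lemma l5 (c : S) : Xi * (X * c) = c := by rw [← mul_assoc, hXiX, one_mul]

lemma key : (Y - Xi) * (X^2 + X^3 - X - X^5) + (X^3 - X - 1) * (Xi^4*Y - Xi^5*Y - X) = 1 := by
  noncomm_ring
  simp only [pow_succ', pow_one, mul_assoc, l1, hYX, l3, hXXi, l5, hXiX, mul_one, one_mul]
  abel

/-- The right-module map `ψ(u, v) = (y - x⁻¹)u + (x³ - x - 1)v` is surjective. -/
theorem stmt_15 : ∀ s : S, ∃ u v : S, (Y - Xi) * u + (X ^ 3 - X - 1) * v = s := by
  intro s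
  refine ⟨(X^2 + X^3 - X - X^5) * s, (Xi^4*Y - Xi^5*Y - X) * s, ?_⟩
  rw [← mul_assoc, ← mul_assoc, ← add_mul, key, one_mul]
end

section
/- The element y − x⁻¹ is not a zero divisor in the group ring ℤ[K] of the Klein bottle group K = ⟨x, y | y⁻¹xyx⟩. -/
lemma left_key {G : Type*} [Group G] (g : G)
    (hg : Function.Injective fun n : ℕ => g ^ n)
    (s : MonoidAlgebra ℤ G) (h : MonoidAlgebra.of ℤ G g * s = s) : s = 0 := by
  by_contra hs
  obtain ⟨a, ha⟩ : ∃ a, s.coeff a ≠ 0 := by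
    by_contra hc
    push_neg at hc
    exact hs (MonoidAlgebra.coeff_injective (Finsupp.ext fun a => hc a))
  have key : ∀ n : ℕ, s.coeff (g ^ n * a) = s.coeff a := by
    intro n
    induction n with
    | zero => simp
    | succ n ih =>
      have h2 := congrArg (fun f : MonoidAlgebra ℤ G => f.coeff (g ^ (n + 1) * a)) h
      simp only [MonoidAlgebra.of_apply, MonoidAlgebra.coeff_single_mul_apply, one_mul] at h2
      rw [← h2, ← ih]
      congr 1
      rw [pow_succ']
      group
  have hinj : Function.Injective fun n : ℕ => g ^ n * a := by
    intro m n hmn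
    simp only at hmn
    exact hg (mul_right_cancel hmn)
  have hsub : Set.range (fun n : ℕ => g ^ n * a) ⊆ ↑s.coeff.support := by
    rintro _ ⟨n, rfl⟩
    rw [Finset.mem_coe, Finsupp.mem_support_iff, key n]
    exact ha
  exact (Set.infinite_range_of_injective hinj) (Set.Finite.subset s.coeff.support.finite_toSet hsub)

lemma right_key {G : Type*} [Group G] (g : G)
    (hg : Function.Injective fun n : ℕ => g ^ n)
    (s : MonoidAlgebra ℤ G) (h : s * MonoidAlgebra.of ℤ G g = s) : s = 0 := by
  by_contra hs
  obtain ⟨a, ha⟩ : ∃ a, s.coeff a ≠ 0 := by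
    by_contra hc
    push_neg at hc
    exact hs (MonoidAlgebra.coeff_injective (Finsupp.ext fun a => hc a))
  have key : ∀ n : ℕ, s.coeff (a * g ^ n) = s.coeff a := by
    intro n
    induction n with
    | zero => simp
    | succ n ih =>
      have h2 := congrArg (fun f : MonoidAlgebra ℤ G => f.coeff (a * g ^ (n + 1))) h
      simp only [MonoidAlgebra.of_apply, MonoidAlgebra.coeff_mul_single_apply, mul_one] at h2
      rw [← h2, ← ih]
      congr 1
      rw [pow_succ]
      group
  have hinj : Function.Injective fun n : ℕ => a * g ^ n := by
    intro m n hmn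
    simp only at hmn
    exact hg (mul_left_cancel hmn)
  have hsub : Set.range (fun n : ℕ => a * g ^ n) ⊆ ↑s.coeff.support := by
    rintro _ ⟨n, rfl⟩
    rw [Finset.mem_coe, Finsupp.mem_support_iff, key n]
    exact ha
  exact (Set.infinite_range_of_injective hinj) (Set.Finite.subset s.coeff.support.finite_toSet hsub)

/-- The homomorphism `K → ℤ`, `x ↦ 0`, `y ↦ 1`. -/
noncomputable def phi : KleinGroup →* Multiplicative ℤ :=
  PresentedGroup.toGroup (f := ![1, Multiplicative.ofAdd 1]) (by
    intro r hr
    rw [kleinRels] at hr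
    simp only [Set.mem_singleton_iff] at hr
    subst hr
    simp [FreeGroup.lift_apply_of])

lemma phi_of0 : phi (PresentedGroup.of 0) = 1 := PresentedGroup.toGroup.of _
lemma phi_of1 : phi (PresentedGroup.of 1) = Multiplicative.ofAdd 1 := PresentedGroup.toGroup.of _

lemma inj_of_phi (g : KleinGroup) (hphi : phi g = Multiplicative.ofAdd 1) :
    Function.Injective fun n : ℕ => g ^ n := by
  intro m n hmn
  have := congrArg phi hmn
  simp only [map_pow, hphi] at this
  have h2 : (m : ℤ) = n := by
    have := congrArg Multiplicative.toAdd this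
    simpa using this
  exact_mod_cast h2

/-- `y - x⁻¹` is not a zero divisor in `ℤ[K]`, on either side. -/
theorem stmt_17 :
    (∀ s : S, (Y - Xi) * s = 0 → s = 0) ∧ (∀ s : S, s * (Y - Xi) = 0 → s = 0) := by
  constructor
  · intro s h
    have h1 : X * ((Y - Xi) * s) = 0 := by rw [h, mul_zero]
    have h2 : (MonoidAlgebra.of ℤ KleinGroup (PresentedGroup.of 0 * PresentedGroup.of 1)) * s = s := by
      have hx : X * Xi = 1 := by
        rw [X, Xi, ← map_mul, mul_inv_cancel, map_one]
      have h3 : (X * Y - 1) * s = 0 := by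
        have e : (X * Y - 1) * s = X * ((Y - Xi) * s) := by
          rw [← hx]; noncomm_ring
        rw [e, h1]
      rw [sub_mul, one_mul, sub_eq_zero] at h3
      rw [map_mul, ← X, ← Y]
      exact h3
    refine left_key _ (inj_of_phi _ ?_) s h2
    rw [map_mul, phi_of0, phi_of1, one_mul]
  · intro s h
    have h1 : (s * (Y - Xi)) * X = 0 := by rw [h, zero_mul]
    have h2 : s * (MonoidAlgebra.of ℤ KleinGroup (PresentedGroup.of 1 * PresentedGroup.of 0)) = s := by
      have hx : Xi * X = 1 := by
        rw [X, Xi, ← map_mul, inv_mul_cancel, map_one]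
      have h3 : s * (Y * X - 1) = 0 := by
        have e : s * (Y * X - 1) = s * (Y - Xi) * X := by
          rw [← hx]; noncomm_ring
        rw [e, h1]
      rw [mul_sub, mul_one, sub_eq_zero] at h3
      rw [map_mul, ← X, ← Y]
      exact h3
    refine right_key _ (inj_of_phi _ ?_) s h2
    rw [map_mul, phi_of0, phi_of1, mul_one]
end

section
/- Let S = ℤ[K] for the Klein bottle group K, and let V = {v ∈ S : (x³ − x − 1)v ∈ (y − x⁻¹)S}, a right S-submodule of S. Then V ⊕ S ≅ S² as right S-modules, i.e., V is stably free of rank 1. -/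
/-- The right `S`-submodule `V = {v ∈ S : (x³ - x - 1)v ∈ (y - x⁻¹)S}`. -/
noncomputable def V : Submodule Sᵐᵒᵖ S where
  carrier := {v : S | ∃ w : S, (X ^ 3 - X - 1) * v = (Y - Xi) * w}
  add_mem' := by
    rintro v₁ v₂ ⟨w₁, h₁⟩ ⟨w₂, h₂⟩
    exact ⟨w₁ + w₂, by rw [mul_add, mul_add, h₁, h₂]⟩
  zero_mem' := ⟨0, by simp⟩
  smul_mem' := by
    rintro m v ⟨w, h⟩
    exact ⟨w * m.unop, by
      rw [MulOpposite.smul_eq_mul_unop, ← mul_assoc, h, mul_assoc]⟩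

/-! ### Auxiliary group-level facts -/

noncomputable def kx : KleinGroup := PresentedGroup.of 0
noncomputable def ky : KleinGroup := PresentedGroup.of 1
noncomputable def ofg : KleinGroup →* S := MonoidAlgebra.of ℤ KleinGroup

lemma krel : ky⁻¹ * kx * ky * kx = 1 := by
  have : ((FreeGroup.of 1)⁻¹ * FreeGroup.of 0 * FreeGroup.of 1 * FreeGroup.of 0 :
      FreeGroup (Fin 2)) ∈ kleinRels := rfl
  have h := (QuotientGroup.eq_one_iff _).2 (Subgroup.subset_normalClosure this)
  exact h

lemma hyx : ky * kx = kx⁻¹ * ky := by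
  have h := congrArg (fun g => kx⁻¹ * ky * g) krel
  simp only [mul_one] at h
  rw [← h]; group

lemma hyxn (n : ℕ) : ky * kx ^ n = (kx⁻¹) ^ n * ky := by
  induction n with
  | zero => simp
  | succ n ih => rw [pow_succ, ← mul_assoc, ih, mul_assoc, hyx, pow_succ, mul_assoc]

/-! ### The key Bézout identity in `S` -/

noncomputable def P (n : ℕ) : S := ofg (kx ^ n)
noncomputable def Q (n : ℕ) : S := ofg ((kx⁻¹) ^ n * ky)

lemma Xdef : X = ofg kx := rfl
lemma Ydef : Y = ofg ky := rfl
lemma Xidef : Xi = ofg kx⁻¹ := rfl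
lemma Xipow (n : ℕ) : Xi ^ n = ofg ((kx⁻¹) ^ n) := by rw [Xidef, ← map_pow]
lemma YP (n : ℕ) : Y * P n = Q n := by rw [Ydef, P, Q, ← map_mul, hyxn]
lemma XiP (n : ℕ) : Xi * P (n + 1) = P n := by
  rw [Xidef, P, P, ← map_mul]; congr 1; group
lemma XiPQ (n : ℕ) : Xi ^ n * Y = Q n := by rw [Xipow, Ydef, Q, ← map_mul]
lemma PP (m n : ℕ) : P m * P n = P (m + n) := by rw [P, P, P, ← map_mul, ← pow_add]
lemma PQ (m n : ℕ) : P m * Q (m + n) = Q n := by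
  rw [P, Q, Q, ← map_mul]; congr 1
  rw [pow_add, ← mul_assoc, ← mul_assoc]
  group
lemma Pone : P 0 = 1 := by rw [P, pow_zero, map_one]
lemma XP : X = P 1 := by rw [Xdef, P, pow_one]
lemma P1pow (n : ℕ) : P 1 ^ n = P n := by rw [P, P, pow_one, ← map_pow]
lemma PQ31 : P 3 * Q 4 = Q 1 := by simpa using PQ 3 1
lemma PQ32 : P 3 * Q 5 = Q 2 := by simpa using PQ 3 2
lemma PQ13 : P 1 * Q 4 = Q 3 := by simpa using PQ 1 3
lemma PQ14 : P 1 * Q 5 = Q 4 := by simpa using PQ 1 4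
lemma XiP2 : Xi * P 3 = P 2 := by simpa using XiP 2
lemma XiP1 : Xi * P 2 = P 1 := by simpa using XiP 1
lemma XiP0 : Xi * P 1 = 1 := by rw [show (1:ℕ) = 0 + 1 from rfl, XiP 0, Pone]
lemma XiP4 : Xi * P 5 = P 4 := by simpa using XiP 4

noncomputable def A : S := X ^ 3 + X ^ 2 - X - X ^ 5
noncomputable def B : S := -X + Xi ^ 4 * Y - Xi ^ 5 * Y
noncomputable def D : S := X ^ 3 - X - 1
noncomputable def E : S := Y - Xi

lemma key_s19 : E * A + D * B = 1 := by
  rw [A, B, D, E]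
  simp only [mul_sub, sub_mul, mul_add, add_mul, mul_neg, neg_mul, mul_one, one_mul, XiPQ, XP,
    P1pow, YP, PP, PQ31, PQ32, PQ13, PQ14, XiP2, XiP1, XiP0, XiP4]
  norm_num
  abel

lemma key' (s : S) : E * (A * s) + D * (B * s) = s := by
  rw [← mul_assoc, ← mul_assoc, ← add_mul, key_s19, one_mul]

/-! ### Left regularity of `Y - Xi` -/

noncomputable def kphi : KleinGroup →* Multiplicative ℤ :=
  PresentedGroup.toGroup (f := fun i => if i = 0 then 1 else Multiplicative.ofAdd 1) (by
    rintro r hr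
    rw [Set.mem_singleton_iff.mp hr]
    simp)

lemma kphi_xy : kphi (kx * ky) = Multiplicative.ofAdd (1 : ℤ) := by
  rw [map_mul, kx, ky, kphi, PresentedGroup.toGroup.of, PresentedGroup.toGroup.of]
  simp

lemma ginj : Function.Injective (fun n : ℕ => ((kx * ky)⁻¹) ^ n) := by
  intro n m h
  have h2 := congrArg kphi h
  simp only [map_pow, map_inv, kphi_xy] at h2
  have := congrArg Multiplicative.toAdd h2
  simpa using this

lemma regg (u : S) (h : ofg (kx * ky) * u = u) : u = 0 := by
  by_contra hu
  obtain ⟨z, hz⟩ := (Finsupp.support_nonempty_iff (f := u.coeff)).mpr (by rwa [Ne, MonoidAlgebra.coeff_eq_zero])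
  have hstep : ∀ w : KleinGroup, u.coeff ((kx * ky)⁻¹ * w) = u.coeff w := by
    intro w
    conv_rhs => rw [← h]
    rw [show ofg (kx * ky) = MonoidAlgebra.single (kx * ky) 1 from rfl,
      MonoidAlgebra.coeff_single_mul_apply, one_mul]
  have hmem : ∀ n : ℕ, ((kx * ky)⁻¹) ^ n * z ∈ u.coeff.support := by
    intro n
    induction n with
    | zero => simpa using hz
    | succ n ih =>
      rw [Finsupp.mem_support_iff] at ih ⊢
      rw [pow_succ', mul_assoc, hstep]
      exact ih
  have hinf : (↑u.coeff.support : Set KleinGroup).Infinite := by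
    apply Set.infinite_of_injective_forall_mem
      (f := fun n : ℕ => ((kx * ky)⁻¹) ^ n * z)
    · intro n m hnm
      exact ginj (mul_right_cancel hnm)
    · intro n; exact_mod_cast hmem n
  exact hinf (u.coeff.support.finite_toSet)

lemma reg (u : S) (h : E * u = 0) : u = 0 := by
  rw [E] at h
  have h2 : X * ((Y - Xi) * u) = 0 := by rw [h, mul_zero]
  rw [← mul_assoc, mul_sub, show X * Xi = 1 by rw [X, Xi, ← map_mul, mul_inv_cancel, map_one],
    sub_mul, one_mul, sub_eq_zero] at h2
  apply regg
  rw [show ofg (kx * ky) = X * Y from by rw [X, Y, ofg, map_mul]; rfl, mul_assoc, ← mul_assoc]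
  exact h2

lemma Ecancel {w w' : S} (h : E * w = E * w') : w = w' :=
  sub_eq_zero.mp (reg (w - w') (by rw [mul_sub, h, sub_self]))

/-! ### Membership in `V` rephrased -/

lemma memV {v : S} : v ∈ V ↔ ∃ w : S, D * v = E * w := Iff.rfl

/-- The unique witness `w` with `D * v = E * w`, for `v ∈ V`. -/
noncomputable def W (v : V) : S := Classical.choose v.2

lemma Wspec (v : V) : D * (v : S) = E * W v := Classical.choose_spec v.2

lemma Wuniq (v : V) {w : S} (h : D * (v : S) = E * w) : W v = w :=
  Ecancel (by rw [← Wspec v, h])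

/-! ### The main theorem -/

noncomputable def psi (q : S × S) : S := E * q.1 + D * q.2

lemma invMemEq (q : S × S) : D * (q.2 - B * psi q) = E * (A * psi q - q.1) := by
  have h1 : E * (A * psi q) = psi q - D * (B * psi q) := by
    rw [eq_sub_iff_add_eq]; exact key' (psi q)
  rw [mul_sub, mul_sub, h1]
  rw [show psi q = E * q.1 + D * q.2 from rfl]
  abel

lemma invMem (q : S × S) : q.2 - B * psi q ∈ V := ⟨A * psi q - q.1, invMemEq q⟩

lemma WAdd (v v' : V) : W (v + v') = W v + W v' := by
  apply Wuniq
  rw [Submodule.coe_add, mul_add, Wspec, Wspec, mul_add]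

lemma WSmul (m : Sᵐᵒᵖ) (v : V) : W (m • v) = W v * m.unop := by
  apply Wuniq
  rw [Submodule.coe_smul, MulOpposite.smul_eq_mul_unop, ← mul_assoc, Wspec, mul_assoc]

noncomputable def fwd (p : V × S) : S × S := (A * p.2 - W p.1, (p.1 : S) + B * p.2)

noncomputable def bwd (q : S × S) : V × S := (⟨q.2 - B * psi q, invMem q⟩, psi q)

lemma left_inv' (p : V × S) : bwd (fwd p) = p := by
  have hpsi : psi (fwd p) = p.2 := by
    show E * (A * p.2 - W p.1) + D * ((p.1 : S) + B * p.2) = p.2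
    rw [mul_sub, mul_add, ← Wspec]
    calc E * (A * p.2) - D * (p.1 : S) + (D * (p.1 : S) + D * (B * p.2))
        = E * (A * p.2) + D * (B * p.2) := by abel
      _ = p.2 := key' p.2
  refine Prod.ext (Subtype.ext ?_) hpsi
  show (fwd p).2 - B * psi (fwd p) = (p.1 : S)
  rw [hpsi]
  show (p.1 : S) + B * p.2 - B * p.2 = (p.1 : S)
  abel

lemma right_inv' (q : S × S) : fwd (bwd q) = q := by
  have hW : W (bwd q).1 = A * psi q - q.1 := Wuniq _ (invMemEq q)
  refine Prod.ext ?_ ?_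
  · show A * psi q - W (bwd q).1 = q.1
    rw [hW]; abel
  · show q.2 - B * psi q + B * psi q = q.2
    abel

/-- `V ⊕ S ≅ S²` as right `S`-modules: `V` is stably free of rank 1. -/
theorem stmt_19 : Nonempty ((V × S) ≃ₗ[Sᵐᵒᵖ] (S × S)) := by
  refine ⟨{
    toFun := fwd
    map_add' := fun p p' => ?_
    map_smul' := fun m p => ?_
    invFun := bwd
    left_inv := left_inv'
    right_inv := right_inv' }⟩
  · show (A * (p.2 + p'.2) - W (p.1 + p'.1), ((p.1 + p'.1 : V) : S) + B * (p.2 + p'.2))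
      = (A * p.2 - W p.1 + (A * p'.2 - W p'.1), ((p.1 : S) + B * p.2 + ((p'.1 : S) + B * p'.2)))
    rw [WAdd, Submodule.coe_add, mul_add, mul_add]
    refine Prod.ext ?_ ?_
    · show A * p.2 + A * p'.2 - (W p.1 + W p'.1) = A * p.2 - W p.1 + (A * p'.2 - W p'.1)
      abel
    · show (p.1 : S) + (p'.1 : S) + (B * p.2 + B * p'.2)
        = (p.1 : S) + B * p.2 + ((p'.1 : S) + B * p'.2)
      abel
  · show (A * (m • p.2) - W (m • p.1), ((m • p.1 : V) : S) + B * (m • p.2))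
      = m • (A * p.2 - W p.1, (p.1 : S) + B * p.2)
    rw [WSmul, Submodule.coe_smul]
    refine Prod.ext ?_ ?_ <;>
      simp [MulOpposite.smul_eq_mul_unop, mul_assoc, sub_mul, add_mul]
end
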